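/- Under the stated independence and integrability assumptions, ∫ Y·W dμ[·|{ω : T ω = true}] − ∫ Y·W dμ[·|{ω : T ω = false}] = ∫ (Y1 − Y0)·W dμ; that is, the difference between the conditional means of Y·W on the treatment and control groups equals the unconditional mean of the individual treatment effect times W. -/

import Mathlib

open MeasureTheory ProbabilityTheory

lemma cond_integral_eq_of_indep
    {Ω : Type*} [MeasurableSpace Ω] (μ : Measure Ω) [IsProbabilityMeasure μ]
    (T : Ω → Bool) (hT : Measurable T) (b : Bool)
    (hpos : μ {ω | T ω = b} ≠ 0)
    (f : Ω → ℝ) (hf : Integrable f μ)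
    (hind : IndepFun T f μ) :
    ∫ x, f x ∂(μ[|{ω | T ω = b}]) = ∫ x, f x ∂μ := by
  set A : Set Ω := {ω | T ω = b} with hA
  have hAm : MeasurableSet A := hT (measurableSet_singleton b)
  have hAne : μ A ≠ ⊤ := (measure_lt_top μ A).ne
  -- indicator function of A as composition with T
  set g : Ω → ℝ := fun ω => if T ω = b then (1 : ℝ) else 0 with hg
  have hgind : IndepFun g f μ :=
    hind.comp (φ := fun c : Bool => if c = b then (1 : ℝ) else 0) (ψ := id)
      (Measurable.of_discrete) measurable_id
  have hgeq : g = A.indicator (fun _ => (1 : ℝ)) := by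
    funext ω
    by_cases h : T ω = b <;> simp [hg, Set.indicator, hA, h]
  have hgint : Integrable g μ := by
    rw [hgeq]
    exact (integrable_indicator_iff hAm).2 ((integrableOn_const_iff (by simp)).2 (Or.inr (measure_lt_top μ A)))
  have hmul : (fun ω => g ω * f ω) = A.indicator f := by
    funext ω
    by_cases h : T ω = b <;> simp [hg, Set.indicator, hA, h]
  have key : ∫ x in A, f x ∂μ = (μ A).toReal * ∫ x, f x ∂μ := by
    have := hgind.integral_mul_eq_mul_integral hgint.aestronglyMeasurable hf.aestronglyMeasurable
    have h1 : ∫ x, g x * f x ∂μ = ∫ x in A, f x ∂μ := by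
      rw [show (fun x => g x * f x) = A.indicator f from hmul, integral_indicator hAm]
    have h2 : ∫ x, g x ∂μ = (μ A).toReal := by
      rw [hgeq, integral_indicator_const _ hAm]; simp [Measure.real]
    calc ∫ x in A, f x ∂μ = ∫ x, g x * f x ∂μ := h1.symm
      _ = (∫ x, g x ∂μ) * ∫ x, f x ∂μ := by
          simpa [Pi.mul_apply] using this
      _ = (μ A).toReal * ∫ x, f x ∂μ := by rw [h2]
  rw [ProbabilityTheory.cond, integral_smul_measure, key, smul_eq_mul,
    ENNReal.toReal_inv, ← mul_assoc, inv_mul_cancel₀, one_mul]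
  exact ENNReal.toReal_ne_zero.2 ⟨hpos, hAne⟩

/-- under RCT (independence of the treatment indicator from the
potential outcomes and the weight), the difference between the conditional
means of `Y * W` on the treatment and control groups equals the unconditional
mean of `(Y1 - Y0) * W`. -/
theorem treatment_effect_identification
    {Ω : Type*} [MeasurableSpace Ω] (μ : Measure Ω) [IsProbabilityMeasure μ]
    (T : Ω → Bool) (hT : Measurable T)
    (Y0 Y1 W : Ω → ℝ)
    (hpos : 0 < μ {ω | T ω = true}) (hlt : μ {ω | T ω = true} < 1)
    (hindep : IndepFun T (fun ω => (Y0 ω, Y1 ω, W ω)) μ)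
    (hint1 : Integrable (fun ω => Y1 ω * W ω) μ)
    (hint0 : Integrable (fun ω => Y0 ω * W ω) μ)
    (Y : Ω → ℝ) (hY : Y = fun ω => if T ω then Y1 ω else Y0 ω) :
    (∫ ω, Y ω * W ω ∂(μ[|{ω | T ω = true}]))
        - (∫ ω, Y ω * W ω ∂(μ[|{ω | T ω = false}]))
      = ∫ ω, (Y1 ω - Y0 ω) * W ω ∂μ := by
  have hAm : MeasurableSet {ω | T ω = true} := hT (measurableSet_singleton true)
  have hBm : MeasurableSet {ω | T ω = false} := hT (measurableSet_singleton false)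
  have hB : {ω | T ω = false} = {ω | T ω = true}ᶜ := by
    ext ω; simp
  have hBpos : μ {ω | T ω = false} ≠ 0 := by
    rw [hB, measure_compl hAm (measure_lt_top μ _).ne]
    simp only [measure_univ]
    intro h
    have := tsub_eq_zero_iff_le.mp h
    exact absurd this (not_le.2 hlt)
  -- independence of T with Y1*W and Y0*W
  have hind1 : IndepFun T (fun ω => Y1 ω * W ω) μ :=
    hindep.comp (φ := id) (ψ := fun p : ℝ × ℝ × ℝ => p.2.1 * p.2.2)
      measurable_id ((measurable_fst.comp measurable_snd).mul
        (measurable_snd.comp measurable_snd))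
  have hind0 : IndepFun T (fun ω => Y0 ω * W ω) μ :=
    hindep.comp (φ := id) (ψ := fun p : ℝ × ℝ × ℝ => p.1 * p.2.2)
      measurable_id (measurable_fst.mul (measurable_snd.comp measurable_snd))
  -- On the treatment event, Y * W = Y1 * W
  have e1 : ∫ ω, Y ω * W ω ∂(μ[|{ω | T ω = true}])
      = ∫ ω, Y1 ω * W ω ∂(μ[|{ω | T ω = true}]) := by
    rw [ProbabilityTheory.cond, integral_smul_measure, integral_smul_measure]
    congr 1
    refine setIntegral_congr_fun hAm (fun ω hω => ?_)
    simp only [Set.mem_setOf_eq] at hω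
    simp [hY, hω]
  have e0 : ∫ ω, Y ω * W ω ∂(μ[|{ω | T ω = false}])
      = ∫ ω, Y0 ω * W ω ∂(μ[|{ω | T ω = false}]) := by
    rw [ProbabilityTheory.cond, integral_smul_measure, integral_smul_measure]
    congr 1
    refine setIntegral_congr_fun hBm (fun ω hω => ?_)
    simp only [Set.mem_setOf_eq] at hω
    simp [hY, hω]
  rw [e1, e0,
    cond_integral_eq_of_indep μ T hT true hpos.ne' _ hint1 hind1,
    cond_integral_eq_of_indep μ T hT false hBpos _ hint0 hind0,
    ← integral_sub hint1 hint0]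
  congr 1
  funext ω
  ring
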